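/- For every positive integer n, every z_1,...,z_n on the unit circle, and every δ with 0 < δ < 1/2, the set E ∩ Δ has Lebesgue measure at least K(δ)/n, where E = {x ∈ [−1,1] : |Re(x·g_n(x))| ≥ δn}, Δ = {x ∈ [−1,1] : |x| > 1 − 3/((2+4δ)n)}, K(δ) = (3/32)(1−2δ)/(1+2δ)², and g_n(x) = ∑_{k=1}^n 1/(x−z_k). -/

import Mathlib

open MeasureTheory Set


private lemma stmt9_aux_re (x : ℝ) (w : ℂ) (hab : w.re^2 + w.im^2 = 1)
    (hD : (x - w.re)^2 + w.im^2 ≠ 0) :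
    ((x:ℂ)/((x:ℂ) - w)).re = 1/2 - (1 - x^2)/((x - w.re)^2 + w.im^2)/2 := by
  have hns : Complex.normSq ((x:ℂ) - w) = (x - w.re)^2 + w.im^2 := by
    rw [Complex.normSq_apply]; simp; ring
  rw [Complex.div_re, hns]
  simp only [Complex.ofReal_re, Complex.ofReal_im, Complex.sub_re, Complex.sub_im,
    zero_mul, zero_div, add_zero]
  field_simp
  ring_nf
  linear_combination (-1) * hab

set_option maxHeartbeats 8000000 in
theorem stmt9 (n : ℕ) (hn : 0 < n) (z : Fin n → ℂ) (hz : ∀ k, ‖z k‖ = 1)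
    (δ : ℝ) (hδ0 : 0 < δ) (hδ1 : δ < 1 / 2) :
    ENNReal.ofReal ((3 / 32) * (1 - 2 * δ) / (1 + 2 * δ) ^ 2 / n) ≤
      volume ({x : ℝ | x ∈ Icc (-1 : ℝ) 1 ∧
          δ * n ≤ |((x : ℂ) * ∑ k, 1 / ((x : ℂ) - z k)).re|} ∩
        {x : ℝ | x ∈ Icc (-1 : ℝ) 1 ∧ 1 - 3 / ((2 + 4 * δ) * n) < |x|}) := by
  have hn' : (0:ℝ) < n := Nat.cast_pos.mpr hn
  have hn1 : (1:ℝ) ≤ n := Nat.one_le_cast.mpr hn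
  set A : ℝ := 1 - 2*δ with hA
  set B : ℝ := 1 + 2*δ with hB
  have hA0 : 0 < A := by rw [hA]; linarith
  have hA1 : A < 1 := by rw [hA]; linarith
  have hB1 : 1 < B := by rw [hB]; linarith
  have hB2 : B < 2 := by rw [hB]; linarith
  have hB0 : (0:ℝ) < B := by linarith
  have hn0 : (n:ℝ) ≠ 0 := ne_of_gt hn'
  set L : ℝ := 1/(2*B*n) with hLdef
  have hL0 : 0 < L := by rw [hLdef]; positivity
  have hBn1 : 1 < B * n := by nlinarith
  have hBnL : 2*B*(n:ℝ)*L = 1 := by rw [hLdef]; field_simp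
  have hLh : L < 1/2 := by rw [hLdef]; rw [div_lt_div_iff₀ (by nlinarith) (by norm_num)]; nlinarith
  set m0 : ℝ := 3*A*L/(16*B) with hm0
  set σ : ℝ := 13*A*L/(64*B) with hσ
  have hm0pos : 0 < m0 := by rw [hm0]; positivity
  have hσpos : 0 < σ := by rw [hσ]; positivity
  have hm0L : m0 ≤ 3/16*L := by
    rw [hm0, div_le_iff₀ (by linarith : (0:ℝ) < 16*B)]
    nlinarith
  have hσL : σ ≤ 13/64*L := by
    rw [hσ, div_le_iff₀ (by linarith : (0:ℝ) < 64*B)]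
    nlinarith
  have hm0σ : m0 ≤ σ := by
    rw [hm0, hσ, div_le_div_iff₀ (by linarith) (by linarith)]
    nlinarith [mul_pos hA0 hL0]
  -- basic facts about zeros
  have habs : ∀ k, (z k).re^2 + (z k).im^2 = 1 := by
    intro k
    have h2 : (z k).re*(z k).re + (z k).im*(z k).im = 1 := by
      rw [← Complex.normSq_apply, ← Complex.sq_norm, hz k]; norm_num
    linear_combination h2
  have ha1 : ∀ k, (z k).re ≤ 1 := by
    intro k
    nlinarith [habs k, sq_nonneg ((z k).im), sq_nonneg ((z k).re - 1)]
  set F : ℝ → ℝ := fun x => ∑ k, (1 - x^2)/((x - (z k).re)^2 + ((z k).im)^2) with hF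
  have hDrw : ∀ (x : ℝ) (k : Fin n),
      (x - (z k).re)^2 + ((z k).im)^2 = (1-x)^2 + 2*(1-(z k).re)*x := by
    intro x k
    linear_combination habs k
  -- key formula for the real part
  have key : ∀ x : ℝ, (∀ k, (x - (z k).re)^2 + ((z k).im)^2 ≠ 0) →
      ((x:ℂ) * ∑ k, 1 / ((x:ℂ) - z k)).re = n/2 - F x / 2 := by
    intro x hD
    have hsum : ((x:ℂ) * ∑ k, 1 / ((x:ℂ) - z k)) = ∑ k, (x:ℂ) / ((x:ℂ) - z k) := by
      rw [Finset.mul_sum]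
      exact Finset.sum_congr rfl fun k _ => mul_one_div _ _
    rw [hsum, Complex.re_sum]
    have h2 : ∀ k : Fin n, ((x:ℂ)/((x:ℂ) - z k)).re
        = 1/2 - (1 - x^2)/((x - (z k).re)^2 + ((z k).im)^2)/2 :=
      fun k => stmt9_aux_re x (z k) (habs k) (hD k)
    rw [Finset.sum_congr rfl fun k _ => h2 k, Finset.sum_sub_distrib, Finset.sum_const,
      Finset.card_univ, Fintype.card_fin, nsmul_eq_mul, ← Finset.sum_div]
    simp only [hF]
    ring
  -- membership criterion
  have hΔeq : (3:ℝ)/((2+4*δ)*n) = 3*L := by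
    have h24 : (2+4*δ)*(n:ℝ) = 2*B*n := by rw [hB]; ring
    rw [h24, hLdef, mul_one_div]
  have memS : ∀ x : ℝ, 0 ≤ x → x ≤ 1 → 1 - 3*L < x →
      (∀ k, (x - (z k).re)^2 + ((z k).im)^2 ≠ 0) → (F x ≤ A*n ∨ B*n ≤ F x) →
      x ∈ ({x : ℝ | x ∈ Icc (-1 : ℝ) 1 ∧
          δ * n ≤ |((x : ℂ) * ∑ k, 1 / ((x : ℂ) - z k)).re|} ∩
        {x : ℝ | x ∈ Icc (-1 : ℝ) 1 ∧ 1 - 3 / ((2 + 4 * δ) * n) < |x|}) := by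
    intro x hx0 hx1 hx3 hD hFc
    have hIcc : x ∈ Icc (-1:ℝ) 1 := ⟨by linarith, hx1⟩
    have hre := key x hD
    constructor
    · refine ⟨hIcc, ?_⟩
      rcases hFc with h | h
      · have h1 : δ*n ≤ ((x:ℂ) * ∑ k, 1 / ((x:ℂ) - z k)).re := by
          rw [hre]; rw [hA] at h; linarith
        exact le_trans h1 (le_abs_self _)
      · have h1 : δ*n ≤ -(((x:ℂ) * ∑ k, 1 / ((x:ℂ) - z k)).re) := by
          rw [hre]; rw [hB] at h; linarith
        exact le_trans h1 (neg_le_abs _)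
    · refine ⟨hIcc, ?_⟩
      rw [hΔeq, abs_of_nonneg hx0]
      exact hx3
  -- reduce to finding a suitable interval
  suffices hmain : ∃ p q : ℝ, m0 ≤ q - p ∧ Icc p q ⊆
      ({x : ℝ | x ∈ Icc (-1 : ℝ) 1 ∧
          δ * n ≤ |((x : ℂ) * ∑ k, 1 / ((x : ℂ) - z k)).re|} ∩
        {x : ℝ | x ∈ Icc (-1 : ℝ) 1 ∧ 1 - 3 / ((2 + 4 * δ) * n) < |x|}) by
    obtain ⟨p, q, hpq, hsub⟩ := hmain
    calc ENNReal.ofReal (3 / 32 * A / B ^ 2 / ↑n)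
        = ENNReal.ofReal m0 := by
          congr 1
          rw [hm0, hLdef]; field_simp; ring
      _ ≤ ENNReal.ofReal (q - p) := ENNReal.ofReal_le_ofReal hpq
      _ = volume (Icc p q) := (Real.volume_Icc).symm
      _ ≤ volume _ := measure_mono hsub
  -- positivity of denominators for 0 ≤ x < 1
  have hDpos : ∀ (x : ℝ) (k : Fin n), 0 ≤ x → x < 1 →
      0 < (x - (z k).re)^2 + ((z k).im)^2 := by
    intro x k hx0 hx1
    rw [hDrw x k]
    have h1 : 0 ≤ 2*(1-(z k).re)*x :=
      mul_nonneg (by linarith [ha1 k]) hx0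
    nlinarith [sq_nonneg (1-x)]
  by_cases hclose : ∃ k0, 2*(1 - (z k0).re) ≤ 2*L^2
  · -- Case 1 : a zero very close to 1
    obtain ⟨k0, hk0⟩ := hclose
    refine ⟨1-2*L, 1-L, by nlinarith, ?_⟩
    intro x hx
    obtain ⟨hxl, hxr⟩ := hx
    have hx0 : 0 ≤ x := by linarith
    have hx1 : x < 1 := by linarith
    refine memS x hx0 hx1.le (by linarith) (fun k => (hDpos x k hx0 hx1).ne') (Or.inr ?_)
    have hterm : B*n ≤ (1 - x^2)/((x - (z k0).re)^2 + ((z k0).im)^2) := by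
      rw [le_div_iff₀ (hDpos x k0 hx0 hx1), hDrw x k0]
      have hBn : B*(n:ℝ) = 1/(2*L) := by
        rw [hLdef]; field_simp
      rw [hBn, div_mul_eq_mul_div, div_le_iff₀ (by linarith : (0:ℝ) < 2*L), one_mul]
      have hcx : 2*(1-(z k0).re)*x ≤ 2*L^2*x := by
        apply mul_le_mul_of_nonneg_right hk0 hx0
      have hint1 : 0 ≤ (1 - L - x)*(x - (1 - 2*L)) :=
        mul_nonneg (by linarith) (by linarith)
      have hint2 : 0 ≤ L*(1-x)*(2*x - 1 + 2*L) :=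
        mul_nonneg (mul_nonneg hL0.le (by linarith)) (by linarith)
      nlinarith [hcx, hint1, hint2]
    calc B*(n:ℝ) ≤ _ := hterm
      _ ≤ F x := by
        simp only [hF]
        exact Finset.single_le_sum
          (fun k _ => div_nonneg (by nlinarith) (hDpos x k hx0 hx1).le)
          (Finset.mem_univ k0)
  · push_neg at hclose
    by_cases hJ : ∀ x ∈ Icc (1-L) (1-L+m0), B*n ≤ F x
    · -- Case 2a : F large on the whole window
      refine ⟨1-L, 1-L+m0, by linarith, ?_⟩
      intro x hx
      obtain ⟨hxl, hxr⟩ := hx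
      have hx0 : 0 ≤ x := by linarith
      have hx1 : x < 1 := by nlinarith
      exact memS x hx0 hx1.le (by linarith) (fun k => (hDpos x k hx0 hx1).ne')
        (Or.inr (hJ x ⟨hxl, hxr⟩))
    · -- Case 2b : all zeros far and F not always large
      push_neg at hJ
      obtain ⟨x₁, hx₁J, hx₁F⟩ := hJ
      obtain ⟨hx₁l, hx₁r⟩ := hx₁J
      have hs₁u : 1 - x₁ ≤ L := by linarith
      have hs₁l : 13/16*L ≤ 1 - x₁ := by nlinarith
      have hx₁0 : 0 ≤ x₁ := by linarith
      have hx₁1 : x₁ < 1 := by nlinarith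
      have hDx₁ : ∀ k, 0 < (x₁ - (z k).re)^2 + ((z k).im)^2 :=
        fun k => hDpos x₁ k hx₁0 hx₁1
      -- bound on the sum of 1/c_k
      have hQ : ∑ k, 1/(2*(1 - (z k).re)) ≤ 64/(39*L) * (B*n) := by
        have hstep : ∀ k : Fin n, 1/(2*(1 - (z k).re)) ≤
            64/(39*L) * ((1 - x₁^2)/((x₁ - (z k).re)^2 + ((z k).im)^2)) := by
          intro k
          have hck : 2*L^2 < 2*(1 - (z k).re) := hclose k
          have hc0 : (0:ℝ) < 2*(1 - (z k).re) := by nlinarith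
          have hD := hDx₁ k
          rw [← mul_div_assoc, div_le_div_iff₀ hc0 hD, one_mul, hDrw x₁ k]
          have hkey : 39*L*((1-x₁)^2 + 2*(1-(z k).re)*x₁) ≤
              64*(1 - x₁^2)*(2*(1-(z k).re)) := by
            have e1 : (1-x₁)^2 ≤ 2*(1-(z k).re)*x₁ := by nlinarith
            have e2 : (13/16*L)*(3/2) ≤ (1-x₁)*(1+x₁) := by
              apply mul_le_mul hs₁l (by linarith) (by norm_num) (by linarith)
            nlinarith [mul_pos hc0 (by linarith : (0:ℝ) < x₁), hL0]
          rw [div_mul_eq_mul_div, div_mul_eq_mul_div,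
            le_div_iff₀ (by linarith : (0:ℝ) < 39*L)]
          nlinarith [hkey]
        calc ∑ k, 1/(2*(1 - (z k).re))
            ≤ ∑ k, 64/(39*L) * ((1 - x₁^2)/((x₁ - (z k).re)^2 + ((z k).im)^2)) :=
              Finset.sum_le_sum fun k _ => hstep k
          _ = 64/(39*L) * F x₁ := by simp only [hF]; rw [Finset.mul_sum]
          _ ≤ 64/(39*L) * (B*n) := by
              apply mul_le_mul_of_nonneg_left hx₁F.le
              exact le_of_lt (div_pos (by norm_num) (by linarith))
      -- F is small on [1-σ, 1]
      refine ⟨1-σ, 1, by linarith, ?_⟩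
      intro x hx
      obtain ⟨hxl, hxr⟩ := hx
      have hσs : σ < 3*L := by nlinarith [hσL, hL0]
      have hσh : σ < 1/2 := by nlinarith [hσL, hLh, hL0]
      have hx0 : 0 < x := by nlinarith
      have hDk : ∀ k, 0 < (x - (z k).re)^2 + ((z k).im)^2 := by
        intro k
        rw [hDrw x k]
        have hck := hclose k
        nlinarith [sq_nonneg (1-x), mul_pos (by nlinarith : (0:ℝ) < 2*(1-(z k).re)) hx0]
      refine memS x hx0.le hxr (by linarith) (fun k => (hDk k).ne') (Or.inl ?_)
      have hterm : ∀ k : Fin n, (1 - x^2)/((x - (z k).re)^2 + ((z k).im)^2) ≤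
          (2*σ/(1-σ)) * (1/(2*(1 - (z k).re))) := by
        intro k
        have hck : 2*L^2 < 2*(1 - (z k).re) := hclose k
        have hc0 : (0:ℝ) < 2*(1 - (z k).re) := by nlinarith
        have hD := hDk k
        have h1σ : (0:ℝ) < 1 - σ := by linarith
        rw [mul_one_div, div_div, div_le_div_iff₀ hD
          (by nlinarith [mul_pos h1σ hc0] : (0:ℝ) < (1 - σ) * (2 * (1 - (z k).re)))]
        have hxs : 1 - x^2 ≤ 2*σ := by nlinarith
        have hDl : (1-σ)*(2*(1 - (z k).re)) ≤ (x - (z k).re)^2 + ((z k).im)^2 := by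
          rw [hDrw x k]
          nlinarith [sq_nonneg (1-x), mul_le_mul_of_nonneg_left hxl hc0.le]
        have hx2 : (0:ℝ) ≤ 1 - x^2 := by nlinarith
        nlinarith [mul_le_mul hxs hDl (mul_nonneg h1σ.le hc0.le) (by linarith : (0:ℝ) ≤ 2*σ)]
      have h1σ : (0:ℝ) < 1 - σ := by linarith
      have hXnn : (0:ℝ) ≤ 2*σ/(1-σ) := le_of_lt (div_pos (by linarith) h1σ)
      have hFle : F x ≤ (2*σ/(1-σ)) * (64/(39*L) * (B*n)) := by
        simp only [hF]
        refine le_trans (Finset.sum_le_sum fun k _ => hterm k) ?_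
        rw [← Finset.mul_sum]
        exact mul_le_mul_of_nonneg_left hQ hXnn
      have hnum : (2*σ/(1-σ)) * (64/(39*L) * (B*n)) ≤ A*n := by
        have h2σ : 2*σ/(1-σ) ≤ 3*σ := by
          rw [div_le_iff₀ h1σ]
          nlinarith
        have hKpos : (0:ℝ) ≤ 64/(39*L) * (B*n) :=
          le_of_lt (mul_pos (div_pos (by norm_num) (by linarith)) (by linarith))
        calc (2*σ/(1-σ)) * (64/(39*L) * (B*n)) ≤ 3*σ * (64/(39*L) * (B*n)) :=
              mul_le_mul_of_nonneg_right h2σ hKpos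
          _ = A*n := by
              rw [hσ]; field_simp; ring
      exact le_trans hFle hnum
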